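/- arXiv:1809.09815 — 2 statements merged into one kernel-verified Lean document; each statement's English description precedes it below -/
import Mathlib

section
/- If a two-point numerical flux f_{i+1/2} = f_S(u_i, u_{i+1}) satisfies Tadmor's shuffle condition (v_{i+1} − v_i)ᵀ f_{i+1/2} = ψ_{i+1} − ψ_i, then multiplying the finite volume scheme du_i/dt = −(f_{i+1/2} − f_{i−1/2})/Δx by v_iᵀ yields dU_i/dt = −(F_{i+1/2} − F_{i−1/2})/Δx, where F_{i+1/2} = ½(v_{i+1} + v_i)ᵀ f_{i+1/2} − ½(ψ_{i+1} + ψ_i). -/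
open scoped BigOperators Matrix

/-- If a two-point numerical flux satisfies Tadmor's shuffle condition
`(v_{i+1} − v_i)ᵀ f_{i+1/2} = ψ_{i+1} − ψ_i`, then multiplying the finite volume
scheme `du_i/dt = −(f_{i+1/2} − f_{i−1/2})/Δx` by `v_iᵀ` yields
`dU_i/dt = −(F_{i+1/2} − F_{i−1/2})/Δx` with
`F_{i+1/2} = ½(v_{i+1}+v_i)ᵀ f_{i+1/2} − ½(ψ_{i+1}+ψ_i)`. -/
theorem tadmor_entropy_conservation
    {n : ℕ} (v fh : ℤ → Fin n → ℝ) (ψ Fh : ℤ → ℝ)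
    (hshuffle : ∀ i, (v (i + 1) - v i) ⬝ᵥ fh i = ψ (i + 1) - ψ i)
    (hFh : ∀ i, Fh i = (1 / 2) * ((v (i + 1) + v i) ⬝ᵥ fh i)
        - (1 / 2) * (ψ (i + 1) + ψ i))
    (Δx : ℝ) (hΔx : 0 < Δx) (dudt : ℤ → Fin n → ℝ)
    (hscheme : ∀ i, dudt i = -(1 / Δx) • (fh i - fh (i - 1))) :
    ∀ i, v i ⬝ᵥ dudt i = -(1 / Δx) * (Fh i - Fh (i - 1)) := by
  intro i
  have key : ∀ j, Fh j = v j ⬝ᵥ fh j - ψ j := by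
    intro j
    have hs := hshuffle j
    rw [sub_dotProduct] at hs
    have h := hFh j
    rw [add_dotProduct] at h
    linarith
  have key' : Fh (i - 1) = v i ⬝ᵥ fh (i - 1) - ψ i := by
    have hs := hshuffle (i - 1)
    rw [sub_dotProduct] at hs
    have h := hFh (i - 1)
    rw [add_dotProduct] at h
    simp only [sub_add_cancel] at hs h
    linarith
  rw [hscheme i, key i, key', dotProduct_smul, dotProduct_sub]
  simp only [smul_eq_mul]
  ring
end

section
/- Let D̃ satisfy the SBP property W D̃ + D̃ᵀ W = B, row sums of D̃ vanish, and let f_S satisfy the entropy conservation condition (v_β − v_α)ᵀ f_S(u_α, u_β) = ψ_β − ψ_α for states u_γ with entropy variables v_γ and potentials ψ_γ. Then Σ_{α,β} (v_α − v_β)ᵀ w_α D̃_{α,β} f_S(u_α, u_β) = ψ_1 − ψ_μ. -/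
open scoped BigOperators Matrix

/-- With `D̃` satisfying the SBP property, vanishing row sums, and
`f_S` entropy-conservative (`(v_β − v_α)ᵀ f_S(u_α,u_β) = ψ_β − ψ_α`), the
flux-differencing entropy volume term reduces to boundary potentials:
`Σ_{α,β} (v_α − v_β)ᵀ w_α D̃_{α,β} f_S(u_α,u_β) = ψ_1 − ψ_μ`. -/
theorem flux_differencing_entropy_volume
    {n μ : ℕ} (hμ : 2 ≤ μ)
    (w : Fin μ → ℝ) (hw : ∀ α, 0 < w α)
    (Dt : Matrix (Fin μ) (Fin μ) ℝ)
    (hsbp : ∀ α β, w α * Dt α β + w β * Dt β α =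
      if α = β then
        (if (α : ℕ) = 0 then (-1 : ℝ) else if (α : ℕ) = μ - 1 then 1 else 0)
      else 0)
    (hrow : ∀ α, ∑ β, Dt α β = 0)
    (u v : Fin μ → Fin n → ℝ) (ψ : Fin μ → ℝ)
    (fS : (Fin n → ℝ) → (Fin n → ℝ) → (Fin n → ℝ))
    (hsym : ∀ a b, fS a b = fS b a)
    (hec : ∀ α β, (v β - v α) ⬝ᵥ fS (u α) (u β) = ψ β - ψ α) :
    ∑ α, ∑ β, (w α * Dt α β) * ((v α - v β) ⬝ᵥ fS (u α) (u β))
      = ψ ⟨0, by omega⟩ - ψ ⟨μ - 1, by omega⟩ := by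

  have key : ∀ α β, (v α - v β) ⬝ᵥ fS (u α) (u β) = ψ α - ψ β := by
    intro α β
    have h1 := hec α β
    have h2 : (v α - v β) ⬝ᵥ fS (u α) (u β)
        = -((v β - v α) ⬝ᵥ fS (u α) (u β)) := by
      rw [← neg_dotProduct, neg_sub]
    rw [h2, h1]; ring
  have col : ∀ β : Fin μ, ∑ α, w α * Dt α β =
      (if (β : ℕ) = 0 then (-1 : ℝ) else if (β : ℕ) = μ - 1 then 1 else 0) := by
    intro β
    have h1 : ∑ α, (w α * Dt α β + w β * Dt β α)
        = (if (β : ℕ) = 0 then (-1 : ℝ) else if (β : ℕ) = μ - 1 then 1 else 0) := by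
      rw [Finset.sum_congr rfl fun α _ => hsbp α β]
      simp
    have h2 : ∑ α, w β * Dt β α = 0 := by
      rw [← Finset.mul_sum, hrow, mul_zero]
    rw [Finset.sum_add_distrib, h2, add_zero] at h1
    exact h1
  have hzm : (⟨0, by omega⟩ : Fin μ) ≠ ⟨μ - 1, by omega⟩ := by
    intro h
    have := congrArg Fin.val h
    simp at this; omega
  calc ∑ α, ∑ β, (w α * Dt α β) * ((v α - v β) ⬝ᵥ fS (u α) (u β))
      = ∑ α, ∑ β, (w α * Dt α β * ψ α - w α * Dt α β * ψ β) := by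
        refine Finset.sum_congr rfl fun α _ => Finset.sum_congr rfl fun β _ => ?_
        rw [key]; ring
    _ = (∑ α, ∑ β, w α * Dt α β * ψ α) - ∑ α, ∑ β, w α * Dt α β * ψ β := by
        rw [← Finset.sum_sub_distrib]
        exact Finset.sum_congr rfl fun α _ => (Finset.sum_sub_distrib _ _)
    _ = 0 - ∑ β, ψ β * ∑ α, w α * Dt α β := by
        congr 1
        · refine Finset.sum_eq_zero fun α _ => ?_
          have : ∑ β, w α * Dt α β * ψ α = (w α * ψ α) * ∑ β, Dt α β := by
            rw [Finset.mul_sum]; exact Finset.sum_congr rfl fun β _ => by ring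
          rw [this, hrow, mul_zero]
        · rw [Finset.sum_comm]
          refine Finset.sum_congr rfl fun β _ => ?_
          rw [Finset.mul_sum]
          exact Finset.sum_congr rfl fun α _ => by ring
    _ = ψ ⟨0, by omega⟩ - ψ ⟨μ - 1, by omega⟩ := by
        rw [Finset.sum_congr rfl fun β (_ : β ∈ Finset.univ) => by rw [col β]]
        have : ∑ β : Fin μ, ψ β * (if (β : ℕ) = 0 then (-1 : ℝ) else if (β : ℕ) = μ - 1 then 1 else 0)
            = ∑ β : Fin μ, ((if β = (⟨μ - 1, by omega⟩ : Fin μ) then ψ β else 0)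
              - (if β = (⟨0, by omega⟩ : Fin μ) then ψ β else 0)) := by
          refine Finset.sum_congr rfl fun β _ => ?_
          by_cases h0 : β = (⟨0, by omega⟩ : Fin μ)
          · subst h0
            simp only [if_pos rfl]
            rw [if_neg hzm]
            simp
          · have h0' : (β : ℕ) ≠ 0 := fun h => h0 (Fin.ext h)
            by_cases h1 : β = (⟨μ - 1, by omega⟩ : Fin μ)
            · subst h1
              simp only [if_pos rfl, if_neg h0]
              rw [if_neg h0']
              simp
            · have h1' : (β : ℕ) ≠ μ - 1 := fun h => h1 (Fin.ext h)
              rw [if_neg h0', if_neg h1', if_neg h1, if_neg h0]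
              ring
        rw [this, Finset.sum_sub_distrib, Finset.sum_ite_eq' , Finset.sum_ite_eq']
        simp
end
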